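/- Let K be a field of characteristic p > 0, q = p^n, and let T = K[X,Y,U,V]/(X^q, Y^q, U^q, V^q, XY − UV). Then the q monomials x^{q-1} y^i u^{q-1-i}, for 0 ≤ i ≤ q−1, are K-linearly independent elements of T, and each of them is annihilated by the ideal (x, y, u, v). -/

import Mathlib

open MvPolynomial

/-- `T = K[X,Y,U,V]/(X^q, Y^q, U^q, V^q, XY - UV)`. -/
noncomputable abbrev truncHypersurface (K : Type) [Field K] (q : ℕ) : Type :=
  MvPolynomial (Fin 4) K ⧸
    Ideal.span {(X 0 : MvPolynomial (Fin 4) K) ^ q, (X 1) ^ q, (X 2) ^ q, (X 3) ^ q,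
      X 0 * X 1 - X 2 * X 3}

noncomputable section SocleAux

/-- The exponent vector `(a, b, c, d)` for `X0^a X1^b X2^c X3^d`. -/
noncomputable def ee (a b c d : ℕ) : Fin 4 →₀ ℕ :=
  Finsupp.single 0 a + Finsupp.single 1 b + Finsupp.single 2 c + Finsupp.single 3 d

@[simp] lemma ee_apply0 (a b c d : ℕ) : ee a b c d 0 = a := by
  simp [ee, Finsupp.single_apply]
@[simp] lemma ee_apply1 (a b c d : ℕ) : ee a b c d 1 = b := by
  simp [ee, Finsupp.single_apply]
@[simp] lemma ee_apply2 (a b c d : ℕ) : ee a b c d 2 = c := by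
  simp [ee, Finsupp.single_apply]
@[simp] lemma ee_apply3 (a b c d : ℕ) : ee a b c d 3 = d := by
  simp [ee, Finsupp.single_apply]

lemma ee_le {a b c d A B C D : ℕ} :
    ee a b c d ≤ ee A B C D ↔ a ≤ A ∧ b ≤ B ∧ c ≤ C ∧ d ≤ D := by
  rw [Finsupp.le_def]
  constructor
  · intro h
    exact ⟨by simpa using h 0, by simpa using h 1, by simpa using h 2, by simpa using h 3⟩
  · rintro ⟨h0, h1, h2, h3⟩ x
    fin_cases x <;> simpa

lemma ee_sub {a b c d A B C D : ℕ} :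
    ee A B C D - ee a b c d = ee (A - a) (B - b) (C - c) (D - d) := by
  ext x
  fin_cases x <;> simp [Finsupp.tsub_apply]

lemma ee_eq {a b c d A B C D : ℕ} :
    ee a b c d = ee A B C D ↔ a = A ∧ b = B ∧ c = C ∧ d = D := by
  constructor
  · intro h
    have h0 := congrArg (fun f => f 0) h
    have h1 := congrArg (fun f => f 1) h
    have h2 := congrArg (fun f => f 2) h
    have h3 := congrArg (fun f => f 3) h
    simp only [ee_apply0, ee_apply1, ee_apply2, ee_apply3] at h0 h1 h2 h3
    exact ⟨h0, h1, h2, h3⟩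
  · rintro ⟨rfl, rfl, rfl, rfl⟩; rfl

lemma X_prod_eq {K : Type} [Field K] (a b c d : ℕ) :
    (X 0 : MvPolynomial (Fin 4) K) ^ a * X 1 ^ b * X 2 ^ c * X 3 ^ d
      = monomial (ee a b c d) 1 := by
  rw [X_pow_eq_monomial, X_pow_eq_monomial, X_pow_eq_monomial, X_pow_eq_monomial,
    monomial_mul, monomial_mul, monomial_mul]
  simp [ee]

/-- The separating linear functional (a Macaulay inverse system element). -/
noncomputable def Lf {K : Type} [Field K] (q i : ℕ) (f : MvPolynomial (Fin 4) K) : K :=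
  ∑ k ∈ Finset.range (i + 1), coeff (ee (q - 1 - k) (i - k) (q - 1 - i + k) k) f

variable {K : Type} [Field K]

lemma Lf_add (q i : ℕ) (f g : MvPolynomial (Fin 4) K) :
    Lf q i (f + g) = Lf q i f + Lf q i g := by
  simp [Lf, coeff_add, Finset.sum_add_distrib]

lemma Lf_sum (q i : ℕ) {α : Type*} (s : Finset α) (F : α → MvPolynomial (Fin 4) K) :
    Lf q i (∑ x ∈ s, F x) = ∑ x ∈ s, Lf q i (F x) := by
  simp only [Lf, MvPolynomial.coeff_sum]
  rw [Finset.sum_comm]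

lemma Lf_smul (q i : ℕ) (r : K) (f : MvPolynomial (Fin 4) K) :
    Lf q i (r • f) = r * Lf q i f := by
  simp [Lf, MvPolynomial.coeff_smul, Finset.mul_sum, smul_eq_mul]

lemma Lf_pow (q i : ℕ) (hq : 1 ≤ q) (hi : i ≤ q - 1) (f : MvPolynomial (Fin 4) K)
    (j : Fin 4) : Lf q i (f * X j ^ q) = 0 := by
  unfold Lf
  refine Finset.sum_eq_zero fun k hk => ?_
  have hk' : k ≤ i := by simpa [Nat.lt_succ_iff] using hk
  rw [X_pow_eq_monomial, coeff_mul_monomial', if_neg]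
  rw [Finsupp.single_le_iff]
  fin_cases j <;> simp <;> omega

lemma Lf_mix (q i : ℕ) (hq : 1 ≤ q) (hi : i ≤ q - 1) (f : MvPolynomial (Fin 4) K) :
    Lf q i (f * (X 0 * X 1 - X 2 * X 3)) = 0 := by
  have h01 : (X 0 * X 1 : MvPolynomial (Fin 4) K) = monomial (ee 1 1 0 0) 1 := by
    have := X_prod_eq (K := K) 1 1 0 0
    simpa using this
  have h23 : (X 2 * X 3 : MvPolynomial (Fin 4) K) = monomial (ee 0 0 1 1) 1 := by
    have := X_prod_eq (K := K) 0 0 1 1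
    simpa using this
  rw [mul_sub, h01, h23]
  unfold Lf
  simp only [coeff_sub, Finset.sum_sub_distrib, coeff_mul_monomial', mul_one, ee_le, ee_sub]
  rw [sub_eq_zero]
  rw [Finset.sum_range_succ, Finset.sum_range_succ']
  have hlast : ¬(1 ≤ q - 1 - i ∧ 1 ≤ i - i ∧ 0 ≤ q - 1 - i + i ∧ 0 ≤ i) := by omega
  have hfirst : ¬(0 ≤ q - 1 - 0 ∧ 0 ≤ i - 0 ∧ 1 ≤ q - 1 - i + 0 ∧ 1 ≤ 0) := by omega
  rw [if_neg hlast, if_neg hfirst, add_zero, add_zero]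
  refine Finset.sum_congr rfl fun k hk => ?_
  have hk' : k < i := Finset.mem_range.mp hk
  rw [if_pos (by omega), if_pos (by omega)]
  have e1 : q - 1 - k - 1 = q - 1 - (k + 1) := by omega
  have e2 : i - k - 1 = i - (k + 1) := by omega
  have e3 : q - 1 - i + k - 0 = q - 1 - i + (k + 1) - 1 := by omega
  have e4 : k - 0 = k + 1 - 1 := by omega
  rw [e1, e2, e3, e4, Nat.sub_zero, Nat.sub_zero]

lemma Lf_vanish (q i : ℕ) (hq : 1 ≤ q) (hi : i ≤ q - 1) (P : MvPolynomial (Fin 4) K)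
    (hP : P ∈ Ideal.span {(X 0 : MvPolynomial (Fin 4) K) ^ q, (X 1) ^ q, (X 2) ^ q, (X 3) ^ q,
      X 0 * X 1 - X 2 * X 3}) : Lf q i P = 0 := by
  have main : ∀ x ∈ Ideal.span {(X 0 : MvPolynomial (Fin 4) K) ^ q, (X 1) ^ q, (X 2) ^ q,
      (X 3) ^ q, X 0 * X 1 - X 2 * X 3}, ∀ f, Lf q i (f * x) = 0 := by
    intro x hx
    refine Submodule.span_induction ?_ ?_ ?_ ?_ hx
    · rintro g hg f
      simp only [Set.mem_insert_iff, Set.mem_singleton_iff] at hg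
      rcases hg with rfl | rfl | rfl | rfl | rfl
      · exact Lf_pow q i hq hi f 0
      · exact Lf_pow q i hq hi f 1
      · exact Lf_pow q i hq hi f 2
      · exact Lf_pow q i hq hi f 3
      · exact Lf_mix q i hq hi f
    · intro f; simp [Lf]
    · intro a b _ _ ha hb f
      rw [mul_add, Lf_add, ha, hb, add_zero]
    · intro r a _ ha f
      rw [smul_eq_mul, ← mul_assoc]
      exact ha (f * r)
  simpa using main P hP 1

lemma Lf_basis (q i j : ℕ) (hq : 1 ≤ q) (hi : i ≤ q - 1) (hj : j ≤ q - 1) :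
    Lf q i (monomial (ee (q - 1) j (q - 1 - j) 0) (1 : K)) = if j = i then 1 else 0 := by
  unfold Lf
  simp only [coeff_monomial, ee_eq]
  by_cases h : j = i
  · subst h
    rw [if_pos rfl]
    rw [Finset.sum_eq_single_of_mem 0 (Finset.mem_range.mpr (by omega))]
    · rw [if_pos (by omega)]
    · intro k _ hk0
      rw [if_neg (by omega)]
  · rw [if_neg h]
    refine Finset.sum_eq_zero fun k hk => ?_
    have hk' : k ≤ i := by simpa [Nat.lt_succ_iff] using hk
    rw [if_neg (by omega)]

lemma socle_ann {R : Type*} [CommRing R] (a b c d : R) (q i : ℕ)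
    (hq : 1 ≤ q) (hi : i ≤ q - 1)
    (ha : a ^ q = 0) (hb : b ^ q = 0) (hc : c ^ q = 0) (hd : d ^ q = 0)
    (hr : a * b = c * d) :
    a * (a ^ (q - 1) * b ^ i * c ^ (q - 1 - i)) = 0 ∧
    b * (a ^ (q - 1) * b ^ i * c ^ (q - 1 - i)) = 0 ∧
    c * (a ^ (q - 1) * b ^ i * c ^ (q - 1 - i)) = 0 ∧
    d * (a ^ (q - 1) * b ^ i * c ^ (q - 1 - i)) = 0 := by
  refine ⟨?_, ?_, ?_, ?_⟩
  · calc a * (a ^ (q - 1) * b ^ i * c ^ (q - 1 - i))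
        = a ^ (q - 1 + 1) * (b ^ i * c ^ (q - 1 - i)) := by ring
      _ = 0 := by rw [show q - 1 + 1 = q by omega, ha, zero_mul]
  · by_cases h : i = q - 1
    · subst h
      calc b * (a ^ (q - 1) * b ^ (q - 1) * c ^ (q - 1 - (q - 1)))
          = b ^ (q - 1 + 1) * (a ^ (q - 1) * c ^ (q - 1 - (q - 1))) := by ring
        _ = 0 := by rw [show q - 1 + 1 = q by omega, hb, zero_mul]
    · have h2 : q - 1 - i = (q - 2 - i) + 1 := by omega
      have h1 : q - 1 = (i + 1) + (q - 2 - i) := by omega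
      have h3 : q = (i + 1) + ((q - 2 - i) + 1) := by omega
      calc b * (a ^ (q - 1) * b ^ i * c ^ (q - 1 - i))
          = (a * b) ^ (i + 1) * a ^ (q - 2 - i) * c ^ ((q - 2 - i) + 1) := by
            rw [h2, h1, mul_pow]; ring
        _ = (c * d) ^ (i + 1) * a ^ (q - 2 - i) * c ^ ((q - 2 - i) + 1) := by rw [hr]
        _ = c ^ ((i + 1) + ((q - 2 - i) + 1)) * (d ^ (i + 1) * a ^ (q - 2 - i)) := by
            rw [mul_pow]; ring
        _ = 0 := by rw [← h3, hc, zero_mul]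
  · by_cases h : i = 0
    · subst h
      calc c * (a ^ (q - 1) * b ^ 0 * c ^ (q - 1 - 0))
          = c ^ (q - 1 - 0 + 1) * (a ^ (q - 1) * b ^ 0) := by ring
        _ = 0 := by rw [show q - 1 - 0 + 1 = q by omega, hc, zero_mul]
    · obtain ⟨j, hj⟩ : ∃ j, q - 1 - i = j := ⟨_, rfl⟩
      have h1 : q - 1 = i + j := by omega
      have h3 : q = i + (j + 1) := by omega
      rw [hj]
      calc c * (a ^ (q - 1) * b ^ i * c ^ j)
          = (a * b) ^ i * a ^ j * c ^ (j + 1) := by rw [h1, mul_pow]; ring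
        _ = (c * d) ^ i * a ^ j * c ^ (j + 1) := by rw [hr]
        _ = c ^ (i + (j + 1)) * (d ^ i * a ^ j) := by rw [mul_pow]; ring
        _ = 0 := by rw [← h3, hc, zero_mul]
  · by_cases h : i = q - 1
    · subst h
      have h0 : q - 1 - (q - 1) = 0 := by omega
      rw [h0]
      calc d * (a ^ (q - 1) * b ^ (q - 1) * c ^ 0)
          = (a * b) ^ (q - 1) * d := by rw [mul_pow]; ring
        _ = (c * d) ^ (q - 1) * d := by rw [hr]
        _ = c ^ (q - 1) * d ^ (q - 1 + 1) := by rw [mul_pow]; ring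
        _ = 0 := by rw [show q - 1 + 1 = q by omega, hd, mul_zero]
    · have h2 : q - 1 - i = (q - 2 - i) + 1 := by omega
      calc d * (a ^ (q - 1) * b ^ i * c ^ (q - 1 - i))
          = (c * d) * (a ^ (q - 1) * b ^ i * c ^ (q - 2 - i)) := by rw [h2]; ring
        _ = (a * b) * (a ^ (q - 1) * b ^ i * c ^ (q - 2 - i)) := by rw [← hr]
        _ = a ^ (q - 1 + 1) * (b ^ (i + 1) * c ^ (q - 2 - i)) := by ring
        _ = 0 := by rw [show q - 1 + 1 = q by omega, ha, zero_mul]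

end SocleAux

lemma hXq_aux (K : Type) [Field K] (q : ℕ) :
    ∀ j : Fin 4, (Ideal.Quotient.mk (Ideal.span {(X 0 : MvPolynomial (Fin 4) K) ^ q, (X 1) ^ q,
      (X 2) ^ q, (X 3) ^ q, X 0 * X 1 - X 2 * X 3}) (X j)) ^ q = 0 := by
  intro j
  rw [← map_pow, Ideal.Quotient.eq_zero_iff_mem]
  fin_cases j
  · exact Ideal.subset_span (by simp)
  · exact Ideal.subset_span (by simp)
  · exact Ideal.subset_span (by simp)
  · exact Ideal.subset_span (by simp)

lemma hrel_aux (K : Type) [Field K] (q : ℕ) :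
    Ideal.Quotient.mk (Ideal.span {(X 0 : MvPolynomial (Fin 4) K) ^ q, (X 1) ^ q,
        (X 2) ^ q, (X 3) ^ q, X 0 * X 1 - X 2 * X 3}) (X 0) * Ideal.Quotient.mk _ (X 1)
      = Ideal.Quotient.mk _ (X 2) * Ideal.Quotient.mk _ (X 3) := by
  rw [← map_mul, ← map_mul, Ideal.Quotient.mk_eq_mk_iff_sub_mem]
  exact Ideal.subset_span (by simp)

lemma indep_aux (K : Type) [Field K] (q : ℕ) (hq1 : 1 ≤ q) :
    LinearIndependent K (fun i : Fin q =>
      (Ideal.Quotient.mk (Ideal.span {(X 0 : MvPolynomial (Fin 4) K) ^ q, (X 1) ^ q, (X 2) ^ q,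
          (X 3) ^ q, X 0 * X 1 - X 2 * X 3}) (X 0)) ^ (q - 1) *
        (Ideal.Quotient.mk _ (X 1)) ^ (i : ℕ) *
        (Ideal.Quotient.mk _ (X 2)) ^ (q - 1 - (i : ℕ))) := by
  rw [Fintype.linearIndependent_iff]
  intro g hg j
  have hmono : ∀ i : Fin q,
      (Ideal.Quotient.mk (Ideal.span {(X 0 : MvPolynomial (Fin 4) K) ^ q, (X 1) ^ q,
          (X 2) ^ q, (X 3) ^ q, X 0 * X 1 - X 2 * X 3}) (X 0)) ^ (q - 1) *
        (Ideal.Quotient.mk _ (X 1)) ^ (i : ℕ) *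
        (Ideal.Quotient.mk _ (X 2)) ^ (q - 1 - (i : ℕ))
        = Ideal.Quotient.mkₐ K (Ideal.span {(X 0 : MvPolynomial (Fin 4) K) ^ q, (X 1) ^ q,
            (X 2) ^ q, (X 3) ^ q, X 0 * X 1 - X 2 * X 3})
            (monomial (ee (q - 1) (i : ℕ) (q - 1 - (i : ℕ)) 0) 1) := by
    intro i
    have hX : (X 0 : MvPolynomial (Fin 4) K) ^ (q - 1) * X 1 ^ (i : ℕ) *
        X 2 ^ (q - 1 - (i : ℕ)) = monomial (ee (q - 1) (i : ℕ) (q - 1 - (i : ℕ)) 0) 1 := by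
      simpa using X_prod_eq (K := K) (q - 1) (i : ℕ) (q - 1 - (i : ℕ)) 0
    rw [Ideal.Quotient.mkₐ_eq_mk, ← hX, map_mul, map_mul, map_pow, map_pow, map_pow]
  set P : MvPolynomial (Fin 4) K :=
    ∑ i : Fin q, g i • monomial (ee (q - 1) (i : ℕ) (q - 1 - (i : ℕ)) 0) 1 with hP
  have hPmem : P ∈ Ideal.span {(X 0 : MvPolynomial (Fin 4) K) ^ q, (X 1) ^ q, (X 2) ^ q,
      (X 3) ^ q, X 0 * X 1 - X 2 * X 3} := by
    rw [← Ideal.Quotient.eq_zero_iff_mem, ← Ideal.Quotient.mkₐ_eq_mk (R₁ := K)]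
    rw [hP, map_sum]
    simp only [map_smul]
    rw [← hg]
    refine Finset.sum_congr rfl fun i _ => ?_
    rw [hmono i]
  have hvanish := Lf_vanish q (j : ℕ) hq1 (by omega) P hPmem
  rw [hP, Lf_sum] at hvanish
  have hterm : ∀ i : Fin q,
      Lf q (j : ℕ) (g i • monomial (ee (q - 1) (i : ℕ) (q - 1 - (i : ℕ)) 0) (1 : K))
        = if i = j then g i else 0 := by
    intro i
    rw [Lf_smul, Lf_basis q (j : ℕ) (i : ℕ) hq1 (by omega) (by omega)]
    by_cases h : i = j
    · subst h; simp
    · rw [if_neg (by simpa [Fin.val_eq_val] using h), if_neg h, mul_zero]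
  rw [Finset.sum_congr rfl fun i _ => hterm i] at hvanish
  simpa using hvanish
/-- In `T = K[X,Y,U,V]/(X^q, Y^q, U^q, V^q, XY - UV)` with `q = p^n`, the `q` monomials
`x^{q-1} y^i u^{q-1-i}` (`0 ≤ i ≤ q-1`) are `K`-linearly independent and each is
annihilated by `(x, y, u, v)`. -/
theorem monomials_linearIndependent_and_socle
    (K : Type) [Field K] (p : ℕ) [CharP K p] (hp : 0 < p) (n : ℕ)
    (q : ℕ) (hq : q = p ^ n)
    (x y u v : truncHypersurface K q)
    (hx : x = Ideal.Quotient.mk _ (X 0)) (hy : y = Ideal.Quotient.mk _ (X 1))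
    (hu : u = Ideal.Quotient.mk _ (X 2)) (hv : v = Ideal.Quotient.mk _ (X 3)) :
    LinearIndependent K
        (fun i : Fin q => x ^ (q - 1) * y ^ (i : ℕ) * u ^ (q - 1 - (i : ℕ))) ∧
      ∀ i : Fin q,
        x * (x ^ (q - 1) * y ^ (i : ℕ) * u ^ (q - 1 - (i : ℕ))) = 0 ∧
        y * (x ^ (q - 1) * y ^ (i : ℕ) * u ^ (q - 1 - (i : ℕ))) = 0 ∧
        u * (x ^ (q - 1) * y ^ (i : ℕ) * u ^ (q - 1 - (i : ℕ))) = 0 ∧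
        v * (x ^ (q - 1) * y ^ (i : ℕ) * u ^ (q - 1 - (i : ℕ))) = 0 := by
  have hq1 : 1 ≤ q := by
    rw [hq]; exact Nat.one_le_pow _ _ hp
  subst hx hy hu hv
  constructor
  · exact indep_aux K q hq1
  · intro i
    exact socle_ann _ _ _ _ q (i : ℕ) hq1 (by omega)
      (hXq_aux K q 0) (hXq_aux K q 1) (hXq_aux K q 2) (hXq_aux K q 3) (hrel_aux K q)
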